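/- Let μ be a finite positive Borel measure on [0,∞), let z_i and z_j be points of the open upper half-plane ℂ⁺ = {z ∈ ℂ : Im z > 0}, and let u_i, u_j, v_i, v_j ∈ ℂ satisfy (∫_{[0,∞)} (t − z_i)⁻¹ dμ(t))·u_i = v_i and (∫_{[0,∞)} (t − z_j)⁻¹ dμ(t))·u_j = v_j. Then conj(u_i)·v_j − conj(v_i)·u_j = (z_j − conj(z_i)) · ∫_{[0,∞)} conj(u_i)·u_j / ((t − z_j)·(t − conj(z_i))) dμ(t). -/

import Mathlib

open MeasureTheory

lemma aux_ne (z : ℂ) (hz : z.im ≠ 0) (t : ℝ) : ((t : ℂ) - z) ≠ 0 := by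
  intro h
  apply hz
  have := congrArg Complex.im (sub_eq_zero.mp h)
  simpa using this.symm

lemma aux_int (μ : Measure ℝ) [IsFiniteMeasure μ] (z : ℂ) (hz : z.im ≠ 0) :
    Integrable (fun t : ℝ => ((t : ℂ) - z)⁻¹) μ := by
  have hc : Continuous fun t : ℝ => ((t : ℂ) - z)⁻¹ :=
    Continuous.inv₀ (by continuity) (fun t => aux_ne z hz t)
  refine ⟨hc.aestronglyMeasurable, ?_⟩
  apply HasFiniteIntegral.of_bounded (C := |z.im|⁻¹)
  filter_upwards with t
  rw [norm_inv]
  have h1 : |z.im| ≤ ‖(t : ℂ) - z‖ := by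
    have := Complex.abs_im_le_norm ((t : ℂ) - z)
    simpa using this
  exact inv_anti₀ (abs_pos.2 hz) h1

lemma aux_int2 (μ : Measure ℝ) [IsFiniteMeasure μ] (z w : ℂ) (hz : z.im ≠ 0)
    (hw : w.im ≠ 0) :
    Integrable (fun t : ℝ => (((t : ℂ) - z) * ((t : ℂ) - w))⁻¹) μ := by
  have hc : Continuous fun t : ℝ => (((t : ℂ) - z) * ((t : ℂ) - w))⁻¹ :=
    Continuous.inv₀ (by continuity)
      (fun t => mul_ne_zero (aux_ne z hz t) (aux_ne w hw t))
  refine ⟨hc.aestronglyMeasurable, ?_⟩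
  apply HasFiniteIntegral.of_bounded (C := |z.im|⁻¹ * |w.im|⁻¹)
  filter_upwards with t
  rw [norm_inv, norm_mul, mul_inv]
  have h1 : |z.im| ≤ ‖(t : ℂ) - z‖ := by
    have := Complex.abs_im_le_norm ((t : ℂ) - z); simpa using this
  have h2 : |w.im| ≤ ‖(t : ℂ) - w‖ := by
    have := Complex.abs_im_le_norm ((t : ℂ) - w); simpa using this
  exact mul_le_mul (inv_anti₀ (abs_pos.2 hz) h1)
    (inv_anti₀ (abs_pos.2 hw) h2) (by positivity) (by positivity)

/-- the key integral identity behind the positivity of S₁. -/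
theorem stmt2 (μ : Measure ℝ) [IsFiniteMeasure μ] (hμ : μ (Set.Iio 0) = 0)
    (zi zj : ℂ) (hzi : 0 < zi.im) (hzj : 0 < zj.im)
    (ui uj vi vj : ℂ)
    (hi : (∫ t : ℝ, ((t : ℂ) - zi)⁻¹ ∂μ) * ui = vi)
    (hj : (∫ t : ℝ, ((t : ℂ) - zj)⁻¹ ∂μ) * uj = vj) :
    (starRingEnd ℂ) ui * vj - (starRingEnd ℂ) vi * uj =
      (zj - (starRingEnd ℂ) zi) *
        ∫ t : ℝ, (starRingEnd ℂ) ui * uj /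
          ((((t : ℂ) - zj)) * (((t : ℂ) - (starRingEnd ℂ) zi))) ∂μ := by
  set w : ℂ := (starRingEnd ℂ) zi with hw
  have hwim : w.im ≠ 0 := by
    simp [hw, Complex.conj_im]; linarith
  have hzjim : zj.im ≠ 0 := ne_of_gt hzj
  have hziim : zi.im ≠ 0 := ne_of_gt hzi
  have hconj : (starRingEnd ℂ) (∫ t : ℝ, ((t : ℂ) - zi)⁻¹ ∂μ)
      = ∫ t : ℝ, ((t : ℂ) - w)⁻¹ ∂μ := by
    rw [← integral_conj]
    congr 1
    funext t
    simp [map_inv₀, map_sub, Complex.conj_ofReal, hw]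
  have key : (∫ t : ℝ, ((t : ℂ) - zj)⁻¹ ∂μ) - (∫ t : ℝ, ((t : ℂ) - w)⁻¹ ∂μ)
      = (zj - w) * ∫ t : ℝ, (((t : ℂ) - zj) * ((t : ℂ) - w))⁻¹ ∂μ := by
    rw [← integral_sub (aux_int μ zj hzjim) (aux_int μ w hwim),
      ← integral_const_mul]
    congr 1
    funext t
    have h1 := aux_ne zj hzjim t
    have h2 := aux_ne w hwim t
    field_simp
    ring
  have hrhs : (∫ t : ℝ, (starRingEnd ℂ) ui * uj /
        (((t : ℂ) - zj) * ((t : ℂ) - w)) ∂μ)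
      = (starRingEnd ℂ) ui * uj * ∫ t : ℝ, (((t : ℂ) - zj) * ((t : ℂ) - w))⁻¹ ∂μ := by
    rw [← integral_const_mul]
    simp [div_eq_mul_inv]
  rw [← hi, ← hj, hrhs, map_mul, hconj]
  linear_combination (starRingEnd ℂ) ui * uj * key
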